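/- Let U : G → U(H) be a unitary representation of a group G on a Hilbert space H, and let H₀ be the closed subspace of H spanned by all eigenvectors of U. Then every element of H₀ has a totally bounded orbit under U, i.e. for each x ∈ H₀ the set {U_g x : g ∈ G} is totally bounded in H. -/
import Mathlib

open Pointwise


/- STATEMENT 2: Every element of the closed span H₀ of the eigenvectors of a unitary
representation U of a group G has a totally bounded orbit under U. -/
theorem totallyBounded_orbit_of_mem_closedSpan_eigenvectors
    {G : Type*} [Group G] {H : Type*} [NormedAddCommGroup H] [InnerProductSpace ℂ H]
    (U : G →* (H ≃ₗᵢ[ℂ] H)) (x : H)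
    (hx : x ∈ (Submodule.span ℂ
        {y : H | y ≠ 0 ∧ ∃ χ : G → ℂ, ∀ g, U g y = χ g • y}).topologicalClosure) :
    TotallyBounded (Set.range fun g => U g x) := by
  set S : Submodule ℂ H :=
    { carrier := {x | TotallyBounded (Set.range fun g => U g x)}
      zero_mem' := by
        refine TotallyBounded.subset ?_ (totallyBounded_singleton (0 : H))
        rintro _ ⟨g, rfl⟩
        simp
      add_mem' := by
        intro a b ha hb
        simp only [Set.mem_setOf_eq, Metric.totallyBounded_iff] at *
        intro ε hε
        obtain ⟨t1, h1f, h1⟩ := ha (ε / 2) (by positivity)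
        obtain ⟨t2, h2f, h2⟩ := hb (ε / 2) (by positivity)
        refine ⟨t1 + t2, h1f.add h2f, ?_⟩
        rintro _ ⟨g, rfl⟩
        have m1 := h1 ⟨g, rfl⟩
        have m2 := h2 ⟨g, rfl⟩
        simp only [Set.mem_iUnion, Metric.mem_ball] at m1 m2 ⊢
        obtain ⟨z1, hz1, hd1⟩ := m1
        obtain ⟨z2, hz2, hd2⟩ := m2
        refine ⟨z1 + z2, Set.add_mem_add hz1 hz2, ?_⟩
        calc dist (U g (a + b)) (z1 + z2)
            = dist (U g a + U g b) (z1 + z2) := by rw [map_add]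
          _ ≤ dist (U g a) z1 + dist (U g b) z2 := dist_add_add_le _ _ _ _
          _ < ε / 2 + ε / 2 := add_lt_add hd1 hd2
          _ = ε := by ring
      smul_mem' := by
        intro c a ha
        refine TotallyBounded.subset ?_ (ha.image (uniformContinuous_const_smul c))
        rintro _ ⟨g, rfl⟩
        exact ⟨U g a, ⟨g, rfl⟩, ((U g).map_smul c a).symm⟩ } with hS
  have hclosed : IsClosed (S : Set H) := by
    apply isClosed_of_closure_subset
    intro x hx
    show TotallyBounded (Set.range fun g => U g x)
    rw [Metric.totallyBounded_iff]
    intro ε hε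
    obtain ⟨y, hyS, hy⟩ := Metric.mem_closure_iff.mp hx (ε / 2) (by positivity)
    obtain ⟨t, htfin, ht⟩ := Metric.totallyBounded_iff.mp hyS (ε / 2) (by positivity)
    refine ⟨t, htfin, ?_⟩
    rintro _ ⟨g, rfl⟩
    have : U g y ∈ ⋃ z ∈ t, Metric.ball z (ε / 2) := ht ⟨g, rfl⟩
    simp only [Set.mem_iUnion, Metric.mem_ball] at this ⊢
    obtain ⟨z, hz, hz2⟩ := this
    refine ⟨z, hz, ?_⟩
    have hdist : dist (U g x) (U g y) = dist x y := (U g).dist_map x y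
    calc dist (U g x) z ≤ dist (U g x) (U g y) + dist (U g y) z := dist_triangle _ _ _
      _ < ε / 2 + ε / 2 := by rw [hdist]; exact add_lt_add hy hz2
      _ = ε := by ring
  have hspan : Submodule.span ℂ
      {y : H | y ≠ 0 ∧ ∃ χ : G → ℂ, ∀ g, U g y = χ g • y} ≤ S := by
    rw [Submodule.span_le]
    rintro y ⟨hy0, χ, hχ⟩
    show TotallyBounded (Set.range fun g => U g y)
    have hcomp : TotallyBounded ((fun c : ℂ => c • y) '' Metric.sphere 0 1) :=
      ((isCompact_sphere (0 : ℂ) 1).image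
        (continuous_id.smul continuous_const)).totallyBounded
    refine TotallyBounded.subset ?_ hcomp
    rintro _ ⟨g, rfl⟩
    have hnorm : ‖χ g‖ = 1 := by
      have h1 : ‖U g y‖ = ‖y‖ := (U g).norm_map y
      rw [hχ g, norm_smul] at h1
      have : ‖y‖ ≠ 0 := norm_ne_zero_iff.mpr hy0
      field_simp at h1
      exact h1
    exact ⟨χ g, by simpa [mem_sphere_iff_norm] using hnorm, (hχ g).symm⟩
  exact Submodule.topologicalClosure_minimal _ hspan hclosed hx
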